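/- For every n, almost surely E[M_{n+1} | 𝔉_n] = M_n · (1 − 30/γ_{n+1}² + 56/γ_{n+1}³); in particular, since γ_{n+1} ≥ 6, the process (M_n)_{n≥0} is a supermartingale with respect to (𝔉_n). -/

import Mathlib

open MeasureTheory ProbabilityTheory Filter Set Topology

noncomputable section

/-- `γ_n = γ₀ + 4 n`. -/
def rpsGamma (γ₀ : ℝ) (n : ℕ) : ℝ := γ₀ + 4 * n

/-- The increments to the (unnormalised) degrees of the three types
for each of the six possible transitions. -/
def rpsIncr : Fin 6 → ℝ × ℝ × ℝ
  | 0 => (4, 0, 0)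
  | 1 => (0, 4, 0)
  | 2 => (0, 0, 4)
  | 3 => (1, 3, 0)
  | 4 => (0, 1, 3)
  | 5 => (3, 0, 1)

/-- The conditional probability of each of the six possible transitions,
as a function of the current state `(x, y, z)`. -/
def rpsProb (i : Fin 6) (x y z : ℝ) : ℝ :=
  match i with
  | 0 => x ^ 2
  | 1 => y ^ 2
  | 2 => z ^ 2
  | 3 => 2 * x * y
  | 4 => 2 * y * z
  | 5 => 2 * z * x

/-- The rock–paper–scissors preferential attachment chain: an adapted process
`(X n, Y n, Z n)` with values in the simplex `Δ²`, deterministic strictly positive initial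
condition and, conditionally on `𝔉 n`, the six possible transitions have the prescribed
probabilities. -/
structure RPSChain {Ω : Type*} [MeasurableSpace Ω] (μ : Measure Ω) (γ₀ : ℝ) where
  F : Filtration ℕ ‹MeasurableSpace Ω›
  X : ℕ → Ω → ℝ
  Y : ℕ → Ω → ℝ
  Z : ℕ → Ω → ℝ
  adapted_X : Adapted F X
  adapted_Y : Adapted F Y
  adapted_Z : Adapted F Z
  nonneg_X : ∀ n ω, 0 ≤ X n ω
  nonneg_Y : ∀ n ω, 0 ≤ Y n ω
  nonneg_Z : ∀ n ω, 0 ≤ Z n ω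
  sum_eq_one : ∀ n ω, X n ω + Y n ω + Z n ω = 1
  init_X_pos : ∀ ω, 0 < X 0 ω
  init_Y_pos : ∀ ω, 0 < Y 0 ω
  init_Z_pos : ∀ ω, 0 < Z 0 ω
  init_X_const : ∀ ω ω', X 0 ω = X 0 ω'
  init_Y_const : ∀ ω ω', Y 0 ω = Y 0 ω'
  init_Z_const : ∀ ω ω', Z 0 ω = Z 0 ω'
  step : ∀ (n : ℕ) (i : Fin 6),
    μ[Set.indicator
        {ω | X (n+1) ω = (rpsGamma γ₀ n * X n ω + (rpsIncr i).1) / rpsGamma γ₀ (n+1) ∧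
             Y (n+1) ω = (rpsGamma γ₀ n * Y n ω + (rpsIncr i).2.1) / rpsGamma γ₀ (n+1) ∧
             Z (n+1) ω = (rpsGamma γ₀ n * Z n ω + (rpsIncr i).2.2) / rpsGamma γ₀ (n+1)}
        (fun _ => (1 : ℝ)) | F n]
      =ᵐ[μ] fun ω => rpsProb i (X n ω) (Y n ω) (Z n ω)


lemma rpsGamma_two_le {γ₀ : ℝ} (hγ₀ : 2 ≤ γ₀) (n : ℕ) : 2 ≤ rpsGamma γ₀ n := by
  have : (0:ℝ) ≤ 4 * n := by positivity
  simp only [rpsGamma]; linarith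

lemma rpsGamma_pos {γ₀ : ℝ} (hγ₀ : 2 ≤ γ₀) (n : ℕ) : 0 < rpsGamma γ₀ n :=
  lt_of_lt_of_le (by norm_num) (rpsGamma_two_le hγ₀ n)

lemma rpsGamma_succ (γ₀ : ℝ) (n : ℕ) : rpsGamma γ₀ (n+1) = rpsGamma γ₀ n + 4 := by
  simp only [rpsGamma]; push_cast; ring

lemma rpsIncr_injective : Function.Injective rpsIncr := by
  intro i j h
  fin_cases i <;> fin_cases j <;> simp_all [rpsIncr, Prod.ext_iff]

lemma rpsIncr_bounds (i : Fin 6) :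
    0 ≤ (rpsIncr i).1 ∧ (rpsIncr i).1 ≤ 4 ∧ 0 ≤ (rpsIncr i).2.1 ∧ (rpsIncr i).2.1 ≤ 4 ∧
      0 ≤ (rpsIncr i).2.2 ∧ (rpsIncr i).2.2 ≤ 4 := by
  fin_cases i <;> norm_num [rpsIncr]

lemma rps_prob_sum (x y z : ℝ) (h : x + y + z = 1) :
    ∑ i : Fin 6, rpsProb i x y z = 1 := by
  simp only [Fin.sum_univ_six, rpsProb]
  linear_combination (x + y + z + 1) * h

lemma rps_algebra (x y g : ℝ) (hg : g + 4 ≠ 0) (z : ℝ) (hz : x + y + z = 1) :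
    ∑ i : Fin 6, (g * x + (rpsIncr i).1) / (g+4) * ((g * y + (rpsIncr i).2.1) / (g+4)) *
        ((g * z + (rpsIncr i).2.2) / (g+4)) * rpsProb i x y z
      = x * y * z * (1 - 30 / (g+4)^2 + 56 / (g+4)^3) := by
  have hz' : z = 1 - x - y := by linarith
  subst hz'
  simp only [Fin.sum_univ_six, rpsProb, rpsIncr]
  field_simp
  ring

/-- the event of the `i`-th transition at step `n`. -/
def rpsEvent {Ω : Type*} [MeasurableSpace Ω] {μ : Measure Ω} {γ₀ : ℝ} (c : RPSChain μ γ₀)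
    (n : ℕ) (i : Fin 6) : Set Ω :=
  {ω | c.X (n+1) ω = (rpsGamma γ₀ n * c.X n ω + (rpsIncr i).1) / rpsGamma γ₀ (n+1) ∧
       c.Y (n+1) ω = (rpsGamma γ₀ n * c.Y n ω + (rpsIncr i).2.1) / rpsGamma γ₀ (n+1) ∧
       c.Z (n+1) ω = (rpsGamma γ₀ n * c.Z n ω + (rpsIncr i).2.2) / rpsGamma γ₀ (n+1)}

/-- the value of `M_{n+1}` on the `i`-th transition event, as an `F n`-measurable function. -/
def rpsG {Ω : Type*} [MeasurableSpace Ω] {μ : Measure Ω} {γ₀ : ℝ} (c : RPSChain μ γ₀)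
    (n : ℕ) (i : Fin 6) : Ω → ℝ := fun ω =>
  (rpsGamma γ₀ n * c.X n ω + (rpsIncr i).1) / rpsGamma γ₀ (n+1) *
    ((rpsGamma γ₀ n * c.Y n ω + (rpsIncr i).2.1) / rpsGamma γ₀ (n+1)) *
    ((rpsGamma γ₀ n * c.Z n ω + (rpsIncr i).2.2) / rpsGamma γ₀ (n+1))

lemma rpsChain_step' {Ω : Type*} [MeasurableSpace Ω] {μ : Measure Ω} {γ₀ : ℝ}
    (c : RPSChain μ γ₀) (n : ℕ) (i : Fin 6) :
    μ[(rpsEvent c n i).indicator (fun _ => (1:ℝ)) | c.F n]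
      =ᵐ[μ] fun ω => rpsProb i (c.X n ω) (c.Y n ω) (c.Z n ω) :=
  c.step n i
set_option maxHeartbeats 1000000 in
/-- For every `n`, almost surely
`E[M_{n+1} | 𝔉_n] = M_n (1 - 30/γ_{n+1}² + 56/γ_{n+1}³)`;
in particular `(M_n)` is a supermartingale. -/
theorem rps_condexp_formula_and_supermartingale
    {Ω : Type*} [MeasurableSpace Ω] (μ : Measure Ω) [IsProbabilityMeasure μ]
    (γ₀ : ℝ) (hγ₀ : 2 ≤ γ₀) (c : RPSChain μ γ₀) :
    (∀ n : ℕ,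
      μ[fun ω => c.X (n+1) ω * c.Y (n+1) ω * c.Z (n+1) ω | c.F n]
        =ᵐ[μ] fun ω => (c.X n ω * c.Y n ω * c.Z n ω) *
          (1 - 30 / (rpsGamma γ₀ (n+1)) ^ 2 + 56 / (rpsGamma γ₀ (n+1)) ^ 3)) ∧
    Supermartingale (fun n ω => c.X n ω * c.Y n ω * c.Z n ω) c.F μ := by
  classical
  have hγpos : ∀ k, 0 < rpsGamma γ₀ k := rpsGamma_pos hγ₀
  have hγne : ∀ k, rpsGamma γ₀ k ≠ 0 := fun k => (hγpos k).ne'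
  have hXle : ∀ k ω, c.X k ω ≤ 1 := fun k ω => by
    have := c.sum_eq_one k ω; have := c.nonneg_Y k ω; have := c.nonneg_Z k ω; linarith
  have hYle : ∀ k ω, c.Y k ω ≤ 1 := fun k ω => by
    have := c.sum_eq_one k ω; have := c.nonneg_X k ω; have := c.nonneg_Z k ω; linarith
  have hZle : ∀ k ω, c.Z k ω ≤ 1 := fun k ω => by
    have := c.sum_eq_one k ω; have := c.nonneg_X k ω; have := c.nonneg_Y k ω; linarith
  have mX : ∀ k, Measurable (c.X k) := fun k => ((c.adapted_X k).mono (c.F.le k) le_rfl)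
  have mY : ∀ k, Measurable (c.Y k) := fun k => ((c.adapted_Y k).mono (c.F.le k) le_rfl)
  have mZ : ∀ k, Measurable (c.Z k) := fun k => ((c.adapted_Z k).mono (c.F.le k) le_rfl)
  -- adaptedness and integrability of M
  have hM_adapted : Adapted c.F (fun k ω => c.X k ω * c.Y k ω * c.Z k ω) :=
    fun k => ((c.adapted_X k).mul (c.adapted_Y k)).mul (c.adapted_Z k)
  have hM_int : ∀ k, Integrable (fun ω => c.X k ω * c.Y k ω * c.Z k ω) μ := by
    intro k
    refine Integrable.mono' (integrable_const (1:ℝ))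
      ((hM_adapted k).mono (c.F.le k) le_rfl).aestronglyMeasurable (ae_of_all _ fun ω => ?_)
    have h1 := c.nonneg_X k ω; have h2 := c.nonneg_Y k ω; have h3 := c.nonneg_Z k ω
    have h4 := hXle k ω; have h5 := hYle k ω; have h6 := hZle k ω
    rw [Real.norm_eq_abs, abs_of_nonneg (by positivity)]
    exact mul_le_one₀ (mul_le_one₀ h4 h2 h5) h3 h6
  -- the main conditional expectation computation
  have key : ∀ n : ℕ,
      μ[fun ω => c.X (n+1) ω * c.Y (n+1) ω * c.Z (n+1) ω | c.F n]
        =ᵐ[μ] fun ω => (c.X n ω * c.Y n ω * c.Z n ω) *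
          (1 - 30 / (rpsGamma γ₀ (n+1)) ^ 2 + 56 / (rpsGamma γ₀ (n+1)) ^ 3) := by
    intro n
    -- measurability of the events
    have hAmeas : ∀ i, MeasurableSet (rpsEvent c n i) := by
      intro i
      have h1 : MeasurableSet {ω | c.X (n+1) ω =
          (rpsGamma γ₀ n * c.X n ω + (rpsIncr i).1) / rpsGamma γ₀ (n+1)} :=
        measurableSet_eq_fun (mX (n+1))
          (((measurable_const.mul (mX n)).add_const _).div_const _)
      have h2 : MeasurableSet {ω | c.Y (n+1) ω =
          (rpsGamma γ₀ n * c.Y n ω + (rpsIncr i).2.1) / rpsGamma γ₀ (n+1)} :=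
        measurableSet_eq_fun (mY (n+1))
          (((measurable_const.mul (mY n)).add_const _).div_const _)
      have h3 : MeasurableSet {ω | c.Z (n+1) ω =
          (rpsGamma γ₀ n * c.Z n ω + (rpsIncr i).2.2) / rpsGamma γ₀ (n+1)} :=
        measurableSet_eq_fun (mZ (n+1))
          (((measurable_const.mul (mZ n)).add_const _).div_const _)
      have : rpsEvent c n i = {ω | c.X (n+1) ω =
          (rpsGamma γ₀ n * c.X n ω + (rpsIncr i).1) / rpsGamma γ₀ (n+1)} ∩
          ({ω | c.Y (n+1) ω = (rpsGamma γ₀ n * c.Y n ω + (rpsIncr i).2.1) / rpsGamma γ₀ (n+1)} ∩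
           {ω | c.Z (n+1) ω = (rpsGamma γ₀ n * c.Z n ω + (rpsIncr i).2.2) / rpsGamma γ₀ (n+1)}) := by
        ext ω; simp [rpsEvent, Set.mem_setOf_eq, Set.mem_inter_iff, and_assoc]
      rw [this]; exact h1.inter (h2.inter h3)
    -- disjointness
    have hdisj : ∀ i j : Fin 6, i ≠ j → ∀ ω, ω ∈ rpsEvent c n i → ω ∈ rpsEvent c n j → False := by
      intro i j hij ω hi hj
      obtain ⟨hi1, hi2, hi3⟩ := hi
      obtain ⟨hj1, hj2, hj3⟩ := hj
      apply hij
      apply rpsIncr_injective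
      have e1 : (rpsIncr i).1 = (rpsIncr j).1 := by
        have h := hi1.symm.trans hj1
        field_simp [hγne (n+1)] at h; linarith
      have e2 : (rpsIncr i).2.1 = (rpsIncr j).2.1 := by
        have h := hi2.symm.trans hj2
        field_simp [hγne (n+1)] at h; linarith
      have e3 : (rpsIncr i).2.2 = (rpsIncr j).2.2 := by
        have h := hi3.symm.trans hj3
        field_simp [hγne (n+1)] at h; linarith
      exact Prod.ext e1 (Prod.ext e2 e3)
    -- integrability of the indicators
    have hI_int : ∀ i, Integrable ((rpsEvent c n i).indicator (fun _ => (1:ℝ))) μ :=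
      fun i => (integrable_const (1:ℝ)).indicator (hAmeas i)
    have hI_nonneg : ∀ i ω, 0 ≤ (rpsEvent c n i).indicator (fun _ => (1:ℝ)) ω :=
      fun i ω => Set.indicator_nonneg (fun _ _ => zero_le_one) ω
    have hI_le : ∀ i ω, (rpsEvent c n i).indicator (fun _ => (1:ℝ)) ω ≤ 1 := by
      intro i ω
      by_cases h : ω ∈ rpsEvent c n i <;>
        simp [Set.indicator_of_mem, Set.indicator_of_notMem, h]
    -- bounds for rpsG
    have hG_bounds : ∀ i ω, 0 ≤ rpsG c n i ω ∧ rpsG c n i ω ≤ 1 := by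
      intro i ω
      simp only [rpsG]
      obtain ⟨b1, b2, b3, b4, b5, b6⟩ := rpsIncr_bounds i
      have hγ' := hγpos (n+1)
      have hγ := hγpos n
      have hsucc := rpsGamma_succ γ₀ n
      have hx0 := c.nonneg_X n ω; have hy0 := c.nonneg_Y n ω; have hz0 := c.nonneg_Z n ω
      have hx1 := hXle n ω; have hy1 := hYle n ω; have hz1 := hZle n ω
      have f1 : 0 ≤ (rpsGamma γ₀ n * c.X n ω + (rpsIncr i).1) / rpsGamma γ₀ (n+1) := by positivity
      have f2 : 0 ≤ (rpsGamma γ₀ n * c.Y n ω + (rpsIncr i).2.1) / rpsGamma γ₀ (n+1) := by positivity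
      have f3 : 0 ≤ (rpsGamma γ₀ n * c.Z n ω + (rpsIncr i).2.2) / rpsGamma γ₀ (n+1) := by positivity
      have g1 : (rpsGamma γ₀ n * c.X n ω + (rpsIncr i).1) / rpsGamma γ₀ (n+1) ≤ 1 := by
        rw [div_le_one hγ']; nlinarith
      have g2 : (rpsGamma γ₀ n * c.Y n ω + (rpsIncr i).2.1) / rpsGamma γ₀ (n+1) ≤ 1 := by
        rw [div_le_one hγ']; nlinarith
      have g3 : (rpsGamma γ₀ n * c.Z n ω + (rpsIncr i).2.2) / rpsGamma γ₀ (n+1) ≤ 1 := by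
        rw [div_le_one hγ']; nlinarith
      exact ⟨mul_nonneg (mul_nonneg f1 f2) f3, mul_le_one₀ (mul_le_one₀ g1 f2 g2) f3 g3⟩
    -- strong measurability of rpsG w.r.t. F n
    have hG_sm : ∀ i, StronglyMeasurable[c.F n] (rpsG c n i) := by
      intro i
      unfold rpsG
      simp only [div_eq_mul_inv]
      exact ((((stronglyMeasurable_const.mul (c.adapted_X n).stronglyMeasurable).add_const _).mul_const _).mul
        (((stronglyMeasurable_const.mul (c.adapted_Y n).stronglyMeasurable).add_const _).mul_const _)).mul
          (((stronglyMeasurable_const.mul (c.adapted_Z n).stronglyMeasurable).add_const _).mul_const _)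
    -- integrability of rpsG * indicator
    have hGI_int : ∀ i, Integrable (rpsG c n i * (rpsEvent c n i).indicator (fun _ => (1:ℝ))) μ := by
      intro i
      refine Integrable.mono' (integrable_const (1:ℝ))
        ((((hG_sm i).mono (c.F.le n)).mul
          (stronglyMeasurable_one.indicator (hAmeas i))).aestronglyMeasurable)
        (ae_of_all _ fun ω => ?_)
      have h0 := (hG_bounds i ω).1
      have h1 := (hG_bounds i ω).2
      have h2 := hI_nonneg i ω
      have h3 := hI_le i ω
      rw [Pi.mul_apply, Real.norm_eq_abs, abs_of_nonneg (mul_nonneg h0 h2)]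
      nlinarith
    -- almost surely, some transition happens
    have hae_union : ∀ᵐ ω ∂μ, ∃ i, ω ∈ rpsEvent c n i := by
      have hS_int : Integrable (fun ω => ∑ i : Fin 6,
          (rpsEvent c n i).indicator (fun _ => (1:ℝ)) ω) μ := by
        apply integrable_finset_sum
        intro i _
        exact hI_int i
      have hS_le : ∀ ω, (∑ i : Fin 6, (rpsEvent c n i).indicator (fun _ => (1:ℝ)) ω) ≤ 1 := by
        intro ω
        by_cases h : ∃ i, ω ∈ rpsEvent c n i
        · obtain ⟨i₀, hi₀⟩ := h
          have : (∑ i : Fin 6, (rpsEvent c n i).indicator (fun _ => (1:ℝ)) ω) = 1 := by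
            rw [Finset.sum_eq_single_of_mem i₀ (Finset.mem_univ _)]
            · simp [Set.indicator_of_mem hi₀]
            · intro j _ hj
              have : ω ∉ rpsEvent c n j := fun hωj => hdisj i₀ j (fun e => hj (e ▸ rfl)) ω hi₀ hωj
              simp [Set.indicator_of_notMem this]
          linarith
        · push_neg at h
          have : (∑ i : Fin 6, (rpsEvent c n i).indicator (fun _ => (1:ℝ)) ω) = 0 := by
            apply Finset.sum_eq_zero
            intro j _
            simp [Set.indicator_of_notMem (h j)]
          linarith
      have hS_int_eq : ∫ ω, (∑ i : Fin 6, (rpsEvent c n i).indicator (fun _ => (1:ℝ)) ω) ∂μ = 1 := by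
        rw [integral_finset_sum _ (fun i _ => hI_int i)]
        have heach : ∀ i : Fin 6, ∫ ω, (rpsEvent c n i).indicator (fun _ => (1:ℝ)) ω ∂μ
            = ∫ ω, rpsProb i (c.X n ω) (c.Y n ω) (c.Z n ω) ∂μ := by
          intro i
          rw [← integral_condExp (c.F.le n) (f := (rpsEvent c n i).indicator (fun _ => (1:ℝ)))]
          exact integral_congr_ae (rpsChain_step' c n i)
        rw [Finset.sum_congr rfl (fun i _ => heach i)]
        have hp_int : ∀ i : Fin 6, Integrable (fun ω => rpsProb i (c.X n ω) (c.Y n ω) (c.Z n ω)) μ := by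
          intro i
          have hpm : Measurable (fun ω => rpsProb i (c.X n ω) (c.Y n ω) (c.Z n ω)) := by
            fin_cases i <;> simp only [rpsProb]
            · exact (mX n).pow_const 2
            · exact (mY n).pow_const 2
            · exact (mZ n).pow_const 2
            · exact (measurable_const.mul (mX n)).mul (mY n)
            · exact (measurable_const.mul (mY n)).mul (mZ n)
            · exact (measurable_const.mul (mZ n)).mul (mX n)
          refine Integrable.mono' (integrable_const (2:ℝ)) hpm.aestronglyMeasurable
            (ae_of_all _ fun ω => ?_)
          have h1 := c.nonneg_X n ω; have h2 := c.nonneg_Y n ω; have h3 := c.nonneg_Z n ω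
          have h4 := hXle n ω; have h5 := hYle n ω; have h6 := hZle n ω
          rw [Real.norm_eq_abs]
          fin_cases i <;> simp only [rpsProb] <;> rw [abs_of_nonneg (by positivity)] <;> nlinarith
        rw [← integral_finset_sum _ (fun i _ => hp_int i)]
        have : ∀ ω, ∑ i : Fin 6, rpsProb i (c.X n ω) (c.Y n ω) (c.Z n ω) = 1 :=
          fun ω => rps_prob_sum _ _ _ (c.sum_eq_one n ω)
        calc ∫ ω, ∑ i : Fin 6, rpsProb i (c.X n ω) (c.Y n ω) (c.Z n ω) ∂μ
            = ∫ _ω, (1:ℝ) ∂μ := integral_congr_ae (ae_of_all _ this)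
          _ = 1 := by simp
      have hza : (fun ω => 1 - ∑ i : Fin 6, (rpsEvent c n i).indicator (fun _ => (1:ℝ)) ω) =ᵐ[μ] 0 := by
        rw [← integral_eq_zero_iff_of_nonneg (fun ω => sub_nonneg.2 (hS_le ω))
          ((integrable_const (1:ℝ)).sub hS_int)]
        rw [integral_sub (integrable_const (1:ℝ)) hS_int]
        simp [hS_int_eq]
      filter_upwards [hza] with ω hω
      by_contra hcon
      push_neg at hcon
      have hz : (∑ i : Fin 6, (rpsEvent c n i).indicator (fun _ => (1:ℝ)) ω) = 0 := by
        exact Finset.sum_eq_zero fun j _ => by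
          simp [Set.indicator_of_notMem (hcon j)]
      simp only [Pi.zero_apply] at hω
      rw [hz] at hω
      norm_num at hω
    -- pointwise decomposition of M_{n+1}
    have hdecomp : (fun ω => c.X (n+1) ω * c.Y (n+1) ω * c.Z (n+1) ω)
        =ᵐ[μ] ∑ i : Fin 6, rpsG c n i * (rpsEvent c n i).indicator (fun _ => (1:ℝ)) := by
      filter_upwards [hae_union] with ω hω
      obtain ⟨i₀, hi₀⟩ := hω
      rw [Finset.sum_apply]
      rw [Finset.sum_eq_single_of_mem i₀ (Finset.mem_univ _)]
      · rw [Pi.mul_apply, Set.indicator_of_mem hi₀, mul_one]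
        obtain ⟨h1, h2, h3⟩ := hi₀
        rw [h1, h2, h3]; rfl
      · intro j _ hj
        have hnm : ω ∉ rpsEvent c n j := fun hωj => hdisj i₀ j (fun e => hj (e ▸ rfl)) ω hi₀ hωj
        simp [Set.indicator_of_notMem hnm]
    -- the conditional expectation of each term
    have hterm : ∀ i : Fin 6,
        μ[rpsG c n i * (rpsEvent c n i).indicator (fun _ => (1:ℝ)) | c.F n]
          =ᵐ[μ] fun ω => rpsG c n i ω * rpsProb i (c.X n ω) (c.Y n ω) (c.Z n ω) := by
      intro i
      refine (condExp_mul_of_stronglyMeasurable_left (hG_sm i) (hGI_int i) (hI_int i)).trans ?_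
      filter_upwards [rpsChain_step' c n i] with ω h
      rw [Pi.mul_apply, h]
    calc μ[fun ω => c.X (n+1) ω * c.Y (n+1) ω * c.Z (n+1) ω | c.F n]
        =ᵐ[μ] μ[∑ i : Fin 6, rpsG c n i * (rpsEvent c n i).indicator (fun _ => (1:ℝ)) | c.F n] :=
          condExp_congr_ae hdecomp
      _ =ᵐ[μ] ∑ i : Fin 6, μ[rpsG c n i * (rpsEvent c n i).indicator (fun _ => (1:ℝ)) | c.F n] :=
          condExp_finsetSum (fun i _ => hGI_int i) _
      _ =ᵐ[μ] fun ω => ∑ i : Fin 6,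
            rpsG c n i ω * rpsProb i (c.X n ω) (c.Y n ω) (c.Z n ω) := by
          filter_upwards [hterm 0, hterm 1, hterm 2, hterm 3, hterm 4, hterm 5]
            with ω h0 h1 h2 h3 h4 h5
          simp only [Finset.sum_apply, Fin.sum_univ_six, h0, h1, h2, h3, h4, h5]
      _ =ᵐ[μ] fun ω => (c.X n ω * c.Y n ω * c.Z n ω) *
            (1 - 30 / (rpsGamma γ₀ (n+1)) ^ 2 + 56 / (rpsGamma γ₀ (n+1)) ^ 3) := by
          refine ae_of_all _ fun ω => ?_
          have hne4 : rpsGamma γ₀ n + 4 ≠ 0 := by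
            rw [← rpsGamma_succ]; exact hγne (n+1)
          have halg := rps_algebra (c.X n ω) (c.Y n ω) (rpsGamma γ₀ n) hne4 (c.Z n ω)
            (c.sum_eq_one n ω)
          simp only [rpsG, rpsGamma_succ γ₀ n]
          exact halg
  refine ⟨key, ?_⟩
  refine supermartingale_nat (fun k => (hM_adapted k).stronglyMeasurable) hM_int fun n => ?_
  have h6 : (6:ℝ) ≤ rpsGamma γ₀ (n+1) := by
    have hn : (0:ℝ) ≤ (n:ℝ) := Nat.cast_nonneg n
    simp only [rpsGamma]; push_cast; linarith
  have hfac : 1 - 30 / (rpsGamma γ₀ (n+1))^2 + 56 / (rpsGamma γ₀ (n+1))^3 ≤ 1 := by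
    have hd : 56 / (rpsGamma γ₀ (n+1))^3 ≤ 30 / (rpsGamma γ₀ (n+1))^2 := by
      rw [div_le_div_iff₀ (by positivity) (by positivity)]
      nlinarith
    linarith
  filter_upwards [key n] with ω hω
  rw [hω]
  have hM0 : 0 ≤ c.X n ω * c.Y n ω * c.Z n ω :=
    mul_nonneg (mul_nonneg (c.nonneg_X n ω) (c.nonneg_Y n ω)) (c.nonneg_Z n ω)
  exact mul_le_of_le_one_right hM0 hfac
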